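/- Let V be a finite-dimensional real vector space with a nondegenerate symmetric bilinear form, W : V → V a symmetric trace-free linear endomorphism (i.e. ⟨Wx,y⟩ = ⟨x,Wy⟩ and tr W = 0). Suppose that ⟨φ, Wφ⟩ = 0 for every null vector φ ∈ V (i.e. every φ with ⟨φ,φ⟩ = 0). If the form is indefinite of signature (1,2) on a 3-dimensional V, then W = 0. -/

import Mathlib

/-- Let `V ≅ ℝ³` carry a symmetric bilinear form `g` of
Lorentz signature `(+,−,−)` (expressed via an orthogonal basis with diagonal
entries `1, −1, −1`), and let `W : V → V` be a `g`-symmetric trace-free linear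
endomorphism such that `g(φ, Wφ) = 0` for every null vector `φ` (every `φ`
with `g(φ,φ) = 0`).  Then `W = 0`. -/
theorem stmt_13 {V : Type*} [AddCommGroup V] [Module ℝ V]
    [FiniteDimensional ℝ V]
    (g : V →ₗ[ℝ] V →ₗ[ℝ] ℝ)
    (e : Module.Basis (Fin 3) ℝ V)
    (he : ∀ i j, g (e i) (e j) = if i = j then (if i = 0 then 1 else -1) else 0)
    (W : V →ₗ[ℝ] V)
    (hsym : ∀ x y : V, g (W x) y = g x (W y))
    (htr : LinearMap.trace ℝ V W = 0)
    (hnull : ∀ φ : V, g φ φ = 0 → g φ (W φ) = 0) :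
    W = 0 := by
  set c : Fin 3 → Fin 3 → ℝ := fun i j => e.repr (W (e j)) i with hc
  have hW : ∀ j, W (e j) = c 0 j • e 0 + c 1 j • e 1 + c 2 j • e 2 := by
    intro j
    have h := e.sum_repr (W (e j))
    rw [Fin.sum_univ_three] at h
    exact h.symm
  -- null conditions
  have h1 : g (e 0 + e 1) (W (e 0 + e 1)) = 0 := by
    apply hnull; simp [he]
  have h2 : g (e 0 - e 1) (W (e 0 - e 1)) = 0 := by
    apply hnull; simp [he]
  have h3 : g (e 0 + e 2) (W (e 0 + e 2)) = 0 := by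
    apply hnull; simp [he, Fin.ext_iff]
  have h4 : g (e 0 - e 2) (W (e 0 - e 2)) = 0 := by
    apply hnull; simp [he, Fin.ext_iff]
  have h5 : g ((5:ℝ) • e 0 + (3:ℝ) • e 1 + (4:ℝ) • e 2)
      (W ((5:ℝ) • e 0 + (3:ℝ) • e 1 + (4:ℝ) • e 2)) = 0 := by
    apply hnull; simp [he, Fin.ext_iff]; ring
  simp only [map_add, map_sub, map_smul, hW, he, smul_eq_mul,
    LinearMap.add_apply, LinearMap.sub_apply, LinearMap.smul_apply] at h1 h2 h3 h4 h5
  norm_num [Fin.ext_iff] at h1 h2 h3 h4 h5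
  -- symmetry conditions
  have s1 : g (W (e 0)) (e 1) = g (e 0) (W (e 1)) := hsym _ _
  have s2 : g (W (e 0)) (e 2) = g (e 0) (W (e 2)) := hsym _ _
  have s3 : g (W (e 1)) (e 2) = g (e 1) (W (e 2)) := hsym _ _
  simp only [hW, map_add, map_smul, he, smul_eq_mul, LinearMap.add_apply,
    LinearMap.smul_apply] at s1 s2 s3
  norm_num [Fin.ext_iff] at s1 s2 s3
  -- trace
  have ht : c 0 0 + c 1 1 + c 2 2 = 0 := by
    rw [LinearMap.trace_eq_matrix_trace ℝ e W] at htr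
    rw [Matrix.trace, Fin.sum_univ_three] at htr
    simpa [Matrix.diag, LinearMap.toMatrix_apply, hc] using htr
  -- solve for each entry
  have z00 : c 0 0 = 0 := by linarith
  have z11 : c 1 1 = 0 := by linarith
  have z22 : c 2 2 = 0 := by linarith
  have z01 : c 0 1 = 0 := by linarith
  have z10 : c 1 0 = 0 := by linarith
  have z02 : c 0 2 = 0 := by linarith
  have z20 : c 2 0 = 0 := by linarith
  have z12 : c 1 2 = 0 := by linarith
  have z21 : c 2 1 = 0 := by linarith
  apply e.ext
  intro i
  fin_cases i <;>
    simp [hW, z00, z11, z22, z01, z10, z02, z20, z12, z21]
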